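/- Let (α, 𝒜) be a measurable space, let μ be a finite measure on the product α × α, and let μ̂ be the pushforward of μ under the swap map (x, y) ↦ (y, x). Define ν := μ − (μ − μ̂) (difference of measures). Then: (i) ν ≤ μ; (ii) ν is symmetric, i.e., the pushforward of ν under the swap map equals ν; and (iii) ν is the largest such measure: every measure ρ on α × α that is invariant under the swap map and satisfies ρ ≤ μ also satisfies ρ ≤ ν. -/

import Mathlib

open MeasureTheory

open Set in
private lemma aux_key {α : Type*} [MeasurableSpace α]
    (μ ν : Measure α) [IsFiniteMeasure μ] [IsFiniteMeasure ν] :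
    (μ - (μ - ν)) ≤ ν ∧
      ∀ ρ : Measure α, ρ ≤ μ → ρ ≤ ν → ρ ≤ μ - (μ - ν) := by
  obtain ⟨s, hs, h1, h2⟩ := hahn_decomposition (μ := μ) (ν := ν)
  have hsub : (μ - ν) ≤ μ := Measure.sub_le
  have key : ∀ t, MeasurableSet t → (μ - (μ - ν)) t = ν (t ∩ s) + μ (t \ s) := by
    intro t ht
    rw [Measure.sub_apply ht hsub]
    have hle : ν.restrict s ≤ μ.restrict s := by
      rw [Measure.le_iff]
      intro u hu
      rw [Measure.restrict_apply hu, Measure.restrict_apply hu]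
      exact h1 _ (hu.inter hs) inter_subset_right
    have hts : (μ - ν) (t ∩ s) = μ (t ∩ s) - ν (t ∩ s) := by
      have h := Measure.restrict_sub_eq_restrict_sub_restrict (μ := μ) (ν := ν) hs
      have : ((μ - ν).restrict s) (t ∩ s) = (μ.restrict s - ν.restrict s) (t ∩ s) := by
        rw [h]
      rwa [Measure.restrict_apply (ht.inter hs), inter_assoc, inter_self,
        Measure.sub_apply (ht.inter hs) hle, Measure.restrict_apply (ht.inter hs),
        Measure.restrict_apply (ht.inter hs), inter_assoc, inter_self] at this
    have htsc : (μ - ν) (t \ s) = 0 := by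
      apply Measure.sub_apply_eq_zero_of_restrict_le_restrict _ (ht.diff hs)
      rw [Measure.le_iff]
      intro u hu
      rw [Measure.restrict_apply hu, Measure.restrict_apply hu]
      exact h2 _ (hu.inter (ht.diff hs))
        (inter_subset_right.trans (diff_subset_compl t s))
    have hνμ : ν (t ∩ s) ≤ μ (t ∩ s) := h1 _ (ht.inter hs) inter_subset_right
    have hdecomp : (μ - ν) t = μ (t ∩ s) - ν (t ∩ s) := by
      rw [← measure_inter_add_diff t hs, hts, htsc, add_zero]
    rw [hdecomp]
    apply ENNReal.sub_eq_of_eq_add (by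
      exact (tsub_le_self.trans_lt (measure_lt_top μ _)).ne)
    rw [add_assoc, add_comm (μ (t \ s)), ← add_assoc, add_tsub_cancel_of_le hνμ,
      measure_inter_add_diff t hs]
  constructor
  · rw [Measure.le_iff]
    intro t ht
    rw [key t ht]
    calc ν (t ∩ s) + μ (t \ s) ≤ ν (t ∩ s) + ν (t \ s) := by
          gcongr ν (t ∩ s) + ?_
          exact h2 _ (ht.diff hs) (diff_subset_compl t s)
      _ = ν t := measure_inter_add_diff t hs
  · intro ρ hρμ hρν
    rw [Measure.le_iff]
    intro t ht
    rw [key t ht, ← measure_inter_add_diff t hs]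
    gcongr ?_ + ?_
    · exact Measure.le_iff'.1 hρν _
    · exact Measure.le_iff'.1 hρμ _

/-- For a finite measure `μ` on `α × α` with swap-image `μ̂`, the measure
`ν := μ − (μ − μ̂)` satisfies `ν ≤ μ`, is symmetric under the swap map, and is the
largest symmetric measure dominated by `μ`. -/
theorem symmetric_part_largest {α : Type*} [MeasurableSpace α]
    (μ : Measure (α × α)) [IsFiniteMeasure μ]
    (μhat : Measure (α × α)) (hμhat : μhat = Measure.map Prod.swap μ)
    (ν : Measure (α × α)) (hν : ν = μ - (μ - μhat)) :
    ν ≤ μ ∧ Measure.map Prod.swap ν = ν ∧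
      ∀ ρ : Measure (α × α), Measure.map Prod.swap ρ = ρ → ρ ≤ μ → ρ ≤ ν := by
  have hfin : IsFiniteMeasure μhat := by
    rw [hμhat]; exact Measure.isFiniteMeasure_map μ Prod.swap
  have mapmap : ∀ τ : Measure (α × α),
      Measure.map Prod.swap (Measure.map Prod.swap τ) = τ := by
    intro τ
    rw [Measure.map_map measurable_swap measurable_swap]
    simp [Prod.swap_swap_eq]
  have hswapμ : Measure.map Prod.swap μhat = μ := by rw [hμhat, mapmap]
  obtain ⟨hle, hlub⟩ := aux_key μ μhat
  have hνμ : ν ≤ μ := hν ▸ Measure.sub_le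
  have hνμhat : ν ≤ μhat := hν ▸ hle
  have hsym : Measure.map Prod.swap ν = ν := by
    have h1 : Measure.map Prod.swap ν ≤ ν := by
      have ha : Measure.map Prod.swap ν ≤ μ := by
        calc Measure.map Prod.swap ν ≤ Measure.map Prod.swap μhat :=
            Measure.map_mono hνμhat measurable_swap
          _ = μ := hswapμ
      have hb : Measure.map Prod.swap ν ≤ μhat := by
        rw [hμhat]
        exact Measure.map_mono hνμ measurable_swap
      have := hlub _ ha hb
      rwa [← hν] at this
    have h2 : ν ≤ Measure.map Prod.swap ν := by
      have := Measure.map_mono h1 (measurable_swap (α := α) (β := α))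
      rwa [mapmap] at this
    exact le_antisymm h1 h2
  refine ⟨hνμ, hsym, fun ρ hρsym hρμ => ?_⟩
  have hρμhat : ρ ≤ μhat := by
    rw [hμhat, ← hρsym]
    exact Measure.map_mono hρμ measurable_swap
  exact hν ▸ hlub ρ hρμ hρμhat
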